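/- The VB₂-action on ℤ⁴ is faithful: the group homomorphism from the free product ℤ * (ℤ/2ℤ) to the group of bijections of ℤ⁴, sending the generator of the free factor ℤ to the bijection σ and the generator of the free factor ℤ/2ℤ to the involution ρ, is injective. -/

import Mathlib

/-- For `x : ℤ`, `x⁺ = max x 0`. -/
def pPart (x : ℤ) : ℤ := max x 0

/-- For `x : ℤ`, `x⁻ = min x 0`. -/
def nPart (x : ℤ) : ℤ := min x 0

/-- The map `σ : ℤ⁴ → ℤ⁴`. -/
def sigmaMap : ℤ × ℤ × ℤ × ℤ → ℤ × ℤ × ℤ × ℤ :=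
  fun (a, b, c, d) =>
    let e := a - nPart b - c + pPart d
    (a + pPart b + pPart (pPart d - e), d - pPart e,
      c + nPart d + nPart (nPart b + e), b + pPart e)

/-- The map `σ⁻¹ : ℤ⁴ → ℤ⁴`. -/
def sigmaInvMap : ℤ × ℤ × ℤ × ℤ → ℤ × ℤ × ℤ × ℤ :=
  fun (a, b, c, d) =>
    let f := a + nPart b - c - pPart d
    (a - pPart b - pPart (pPart d + f), d + nPart f,
      c - nPart d - nPart (nPart b - f), b - nPart f)

/-- The map `ρ : ℤ⁴ → ℤ⁴`, `(a,b,c,d) ↦ (c,d,a,b)`. -/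
def rhoMap : ℤ × ℤ × ℤ × ℤ → ℤ × ℤ × ℤ × ℤ :=
  fun (a, b, c, d) => (c, d, a, b)

namespace VB2Aux

abbrev V : Type := ℤ × ℤ × ℤ × ℤ

def Xp (v : V) : Prop := v.2.1 < 0 ∧ 0 < v.2.2.2 ∧ 0 < v.1 - v.2.2.1
def Xm (v : V) : Prop := v.2.1 < 0 ∧ 0 < v.2.2.2 ∧ v.1 - v.2.2.1 < 0
def Zs (v : V) : Prop := v.2.2.2 < 0 ∧ 0 < v.2.1

theorem L1 (v) (h : Zs v) : Xp (sigmaMap v) := by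
  obtain ⟨a,b,c,d⟩ := v
  simp only [Zs, Xp, sigmaMap, pPart, nPart] at *; omega
theorem L2 (v) (h : Zs v) : Xm (sigmaInvMap v) := by
  obtain ⟨a,b,c,d⟩ := v
  simp only [Zs, Xm, sigmaInvMap, pPart, nPart] at *; omega
theorem L3 (v) (h : Xp v) : Xp (sigmaMap v) := by
  obtain ⟨a,b,c,d⟩ := v
  simp only [Xp, sigmaMap, pPart, nPart] at *; omega
theorem L4 (v) (h : Xm v) : Xm (sigmaInvMap v) := by
  obtain ⟨a,b,c,d⟩ := v
  simp only [Xm, sigmaInvMap, pPart, nPart] at *; omega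
theorem Linv (v) : sigmaMap (sigmaInvMap v) = v := by
  obtain ⟨a,b,c,d⟩ := v
  simp only [sigmaMap, sigmaInvMap, pPart, nPart, Prod.mk.injEq]; omega

/-- ping-pong target sets -/
def XT : Set V := {v | v.2.1 < 0 ∧ 0 < v.2.2.2 ∧ v.1 - v.2.2.1 ≠ 0}
def XF : Set V := {v | v.2.2.2 < 0 ∧ 0 < v.2.1 ∧ v.1 - v.2.2.1 ≠ 0}

theorem Xp_subset_XT (v) (h : Xp v) : v ∈ XT := ⟨h.1, h.2.1, by have := h.2.2; omega⟩
theorem Xm_subset_XT (v) (h : Xm v) : v ∈ XT := ⟨h.1, h.2.1, by have := h.2.2; omega⟩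
theorem XF_subset_Zs (v) (h : v ∈ XF) : Zs v := ⟨h.1, h.2.1⟩

section Perm

variable (σp : Equiv.Perm V) (hs : ∀ v, σp v = sigmaMap v)

include hs

theorem inv_apply (v : V) : σp⁻¹ v = sigmaInvMap v := by
  have h1 : σp (sigmaInvMap v) = v := by rw [hs, Linv]
  have := congrArg (fun w => σp⁻¹ w) h1
  simpa using this.symm

theorem pow_Xp (m : ℕ) (v : V) (h : Xp v) : Xp ((σp ^ m) v) := by
  induction m generalizing v with
  | zero => simpa using h
  | succ k ih =>
      rw [pow_succ, Equiv.Perm.mul_apply, hs]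
      exact ih _ (L3 v h)

theorem pow_Xm (m : ℕ) (v : V) (h : Xm v) : Xm (((σp⁻¹) ^ m) v) := by
  induction m generalizing v with
  | zero => simpa using h
  | succ k ih =>
      rw [pow_succ, Equiv.Perm.mul_apply, inv_apply σp hs]
      exact ih _ (L4 v h)

theorem zpow_mem (n : ℤ) (hn : n ≠ 0) (v : V) (hv : Zs v) : (σp ^ n) v ∈ XT := by
  rcases hn.lt_or_gt with hneg | hpos
  · obtain ⟨m, hm⟩ : ∃ m : ℕ, n = -((m : ℤ) + 1) := ⟨(-n - 1).toNat, by omega⟩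
    subst hm
    have : σp ^ (-((m : ℤ) + 1)) = (σp⁻¹) ^ (m + 1) := by
      rw [zpow_neg, ← inv_zpow]
      norm_cast
    rw [this, pow_succ, Equiv.Perm.mul_apply, inv_apply σp hs]
    exact Xm_subset_XT _ (pow_Xm σp hs m _ (L2 v hv))
  · obtain ⟨m, hm⟩ : ∃ m : ℕ, n = (m : ℤ) + 1 := ⟨(n - 1).toNat, by omega⟩
    subst hm
    have : σp ^ ((m : ℤ) + 1) = σp ^ (m + 1) := by norm_cast
    rw [this, pow_succ, Equiv.Perm.mul_apply, hs]
    exact Xp_subset_XT _ (pow_Xp σp hs m _ (L1 v hv))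

end Perm

def Hfam : Bool → Type
  | true => Multiplicative ℤ
  | false => Multiplicative (ZMod 2)

instance : (b : Bool) → Group (Hfam b)
  | true => inferInstanceAs (Group (Multiplicative ℤ))
  | false => inferInstanceAs (Group (Multiplicative (ZMod 2)))

def fam {P : Type} [Monoid P] (f1 : Multiplicative ℤ →* P)
    (f2 : Multiplicative (ZMod 2) →* P) : (b : Bool) → Hfam b →* P
  | true => f1
  | false => f2

def Xset : Bool → Set V
  | true => XT
  | false => XF

end VB2Aux

open Pointwise VB2Aux

/-- The `VB₂`-action on `ℤ⁴` is faithful: the homomorphism from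
`VB₂ ≅ ℤ * (ℤ/2ℤ)` to the bijections of `ℤ⁴` sending the generator of the free
factor `ℤ` to the bijection `σ` and the generator of the free factor `ℤ/2ℤ` to the
involution `ρ` is injective. -/
theorem VB2_action_faithful
    (φ : Monoid.Coprod (Multiplicative ℤ) (Multiplicative (ZMod 2)) →*
        Equiv.Perm (ℤ × ℤ × ℤ × ℤ))
    (hσ : ∀ v, φ (Monoid.Coprod.inl (Multiplicative.ofAdd (1 : ℤ))) v = sigmaMap v)
    (hρ : ∀ v, φ (Monoid.Coprod.inr (Multiplicative.ofAdd (1 : ZMod 2))) v = rhoMap v) :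
    Function.Injective φ := by
  classical
  set σp : Equiv.Perm V := φ (Monoid.Coprod.inl (Multiplicative.ofAdd (1 : ℤ))) with hσp
  have hcard : (3 : Cardinal) ≤ Cardinal.mk Bool ∨ ∃ i, (3:Cardinal) ≤ Cardinal.mk (Hfam i) := by
    right
    refine ⟨true, ?_⟩
    have h1 : (3 : Cardinal) ≤ Cardinal.aleph0 := by
      exact_mod_cast (Cardinal.nat_lt_aleph0 3).le
    exact h1.trans (Cardinal.aleph0_le_mk (Multiplicative ℤ))
  have hne : ∀ i, (Xset i).Nonempty := by
    intro i
    cases i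
    · exact ⟨(1, 1, 0, -1), by norm_num [Xset, XF]⟩
    · exact ⟨(1, -1, 0, 1), by norm_num [Xset, XT]⟩
  have hdisj : Pairwise (Function.onFun Disjoint Xset) := by
    intro i j hij
    have key : Disjoint XT XF := by
      rw [Set.disjoint_left]
      rintro v ⟨h1, -, -⟩ ⟨-, h2, -⟩
      omega
    cases i <;> cases j <;> simp_all [Function.onFun, Xset, key, key.symm]
  have key_tf : ∀ h : Multiplicative ℤ, h ≠ 1 →
      (φ.comp Monoid.Coprod.inl) h • XF ⊆ XT := by
    intro h h1 v hv
    rw [Set.mem_smul_set] at hv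
    obtain ⟨u, hu, rfl⟩ := hv
    have hh : h = Multiplicative.ofAdd (1 : ℤ) ^ (h.toAdd) := by
      rw [← ofAdd_zsmul]
      simp
    have hn : h.toAdd ≠ 0 := by
      intro h0
      apply h1
      rw [hh, h0, zpow_zero]
    have hfh : (φ.comp Monoid.Coprod.inl) h = σp ^ (h.toAdd) := by
      rw [hσp]
      show φ (Monoid.Coprod.inl h) = _
      conv_lhs => rw [hh]
      rw [map_zpow, map_zpow]
    rw [Equiv.Perm.smul_def, hfh]
    exact zpow_mem σp hσ h.toAdd hn u (XF_subset_Zs u hu)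
  have key_ft : ∀ h : Multiplicative (ZMod 2), h ≠ 1 →
      (φ.comp Monoid.Coprod.inr) h • XT ⊆ XF := by
    intro h h1 v hv
    rw [Set.mem_smul_set] at hv
    obtain ⟨u, hu, rfl⟩ := hv
    have hh : h = Multiplicative.ofAdd (1 : ZMod 2) := by
      revert h1
      revert h
      decide
    have hru : (φ.comp Monoid.Coprod.inr) h u = rhoMap u := by
      rw [hh]
      exact hρ u
    rw [Equiv.Perm.smul_def, hru]
    obtain ⟨a, b, c, d⟩ := u
    obtain ⟨h1', h2', h3'⟩ := hu
    refine ⟨?_, ?_, ?_⟩ <;> simp only [rhoMap, XT, Set.mem_setOf_eq] at * <;> omega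
  have hpp : Pairwise fun i j => ∀ h : Hfam i, h ≠ 1 →
      (fam (φ.comp Monoid.Coprod.inl) (φ.comp Monoid.Coprod.inr)) i h • Xset j ⊆ Xset i := by
    intro i j hij
    match i, j with
    | true, true => exact absurd rfl hij
    | false, false => exact absurd rfl hij
    | true, false => exact key_tf
    | false, true => exact key_ft
  have hψinj : Function.Injective
      (Monoid.CoprodI.lift (fam (φ.comp Monoid.Coprod.inl) (φ.comp Monoid.Coprod.inr))) :=
    Monoid.CoprodI.lift_injective_of_ping_pong _ hcard Xset hne hdisj hpp
  set j : Monoid.Coprod (Multiplicative ℤ) (Multiplicative (ZMod 2)) →* Monoid.CoprodI Hfam :=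
    Monoid.Coprod.lift (Monoid.CoprodI.of (M := Hfam) (i := true))
      (Monoid.CoprodI.of (M := Hfam) (i := false)) with hj
  have hjleft : ∀ x, (Monoid.CoprodI.lift (fam Monoid.Coprod.inl Monoid.Coprod.inr)) (j x) = x := by
    have heq : (Monoid.CoprodI.lift (fam Monoid.Coprod.inl Monoid.Coprod.inr)).comp j
        = MonoidHom.id _ := by
      apply Monoid.Coprod.hom_ext <;> apply MonoidHom.ext <;> intro x <;>
        simp only [MonoidHom.comp_apply, MonoidHom.id_apply, hj,
          Monoid.Coprod.lift_apply_inl, Monoid.Coprod.lift_apply_inr,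
          Monoid.CoprodI.lift_of] <;> rfl
    intro x
    exact DFunLike.congr_fun heq x
  have hjinj : Function.Injective j := Function.LeftInverse.injective hjleft
  have hcomp : ∀ x,
      φ x = Monoid.CoprodI.lift (fam (φ.comp Monoid.Coprod.inl) (φ.comp Monoid.Coprod.inr))
        (j x) := by
    have heq : (Monoid.CoprodI.lift
        (fam (φ.comp Monoid.Coprod.inl) (φ.comp Monoid.Coprod.inr))).comp j = φ := by
      apply Monoid.Coprod.hom_ext <;> apply MonoidHom.ext <;> intro x <;>
        simp only [MonoidHom.comp_apply, hj,
          Monoid.Coprod.lift_apply_inl, Monoid.Coprod.lift_apply_inr,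
          Monoid.CoprodI.lift_of] <;> rfl
    intro x
    exact (DFunLike.congr_fun heq x).symm
  intro x y hxy
  apply hjinj
  apply hψinj
  rw [← hcomp, ← hcomp]
  exact hxy
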